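/- Define ψ : ℝ → ℝ by ψ(t) = ln(max(e^{-1}, t)). Then for every integer x ≥ 1 and every integer y ≥ 0, it holds that x/(x+y) ≤ ψ(y+x) − ψ(y) ≤ (ln(1+x) + 1) · x/(x+y). -/

import Mathlib

/-- `ψ(t) = ln(max(e⁻¹, t))`. -/
noncomputable def psi (t : ℝ) : ℝ := Real.log (max (Real.exp (-1)) t)

lemma psi_eq_log {t : ℝ} (h : 1 ≤ t) : psi t = Real.log t := by
  have h1 : Real.exp (-1) ≤ 1 := by
    rw [Real.exp_le_one_iff]; norm_num
  rw [psi, max_eq_right (le_trans h1 h)]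

lemma psi_zero : psi 0 = -1 := by
  rw [psi, max_eq_left (le_of_lt (Real.exp_pos _)), Real.log_exp]

/-- For every integer `x ≥ 1` and every integer `y ≥ 0`,
`x/(x+y) ≤ ψ(y+x) − ψ(y) ≤ (ln(1+x) + 1) · x/(x+y)`. -/
theorem psi_increment_bounds (x y : ℕ) (hx : 1 ≤ x) :
    (x : ℝ) / ((x : ℝ) + (y : ℝ)) ≤ psi ((y : ℝ) + (x : ℝ)) - psi (y : ℝ) ∧
    psi ((y : ℝ) + (x : ℝ)) - psi (y : ℝ)
      ≤ (Real.log (1 + (x : ℝ)) + 1) * ((x : ℝ) / ((x : ℝ) + (y : ℝ))) := by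
  have hx1 : (1 : ℝ) ≤ (x : ℝ) := by exact_mod_cast hx
  have hxpos : (0 : ℝ) < x := by linarith
  rcases Nat.eq_zero_or_pos y with hy | hy
  · subst hy
    push_cast
    rw [zero_add, psi_eq_log hx1, psi_zero]
    have hlogx : 0 ≤ Real.log x := Real.log_nonneg hx1
    have hmono : Real.log x ≤ Real.log (1 + x) :=
      Real.log_le_log (by positivity) (by linarith)
    constructor
    · rw [add_zero, div_self (ne_of_gt hxpos)]; linarith
    · rw [add_zero, div_self (ne_of_gt hxpos)]; linarith
  · have hy1 : (1 : ℝ) ≤ (y : ℝ) := by exact_mod_cast hy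
    have hypos : (0 : ℝ) < y := by linarith
    have hxy : (0 : ℝ) < (x : ℝ) + y := by linarith
    have hyx1 : (1 : ℝ) ≤ (y : ℝ) + x := by linarith
    rw [psi_eq_log hyx1, psi_eq_log hy1, ← Real.log_div (by linarith) (ne_of_gt hypos)]
    have hqpos : (0 : ℝ) < ((y : ℝ) + x) / y := by positivity
    constructor
    · have h1 := Real.one_sub_inv_le_log_of_pos hqpos
      have heq : 1 - (((y : ℝ) + x) / y)⁻¹ = x / (x + y) := by
        rw [inv_div, eq_div_iff (ne_of_gt hxy), sub_mul, one_mul,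
          div_mul_eq_mul_div, mul_div_assoc]
        rw [add_comm (x:ℝ) (y:ℝ), div_self (by linarith : (y:ℝ) + x ≠ 0)]
        ring
      linarith [heq ▸ h1]
    · -- upper bound
      have hL1 : Real.log (((y : ℝ) + x) / y) ≤ x / y := by
        have := Real.log_le_sub_one_of_pos hqpos
        have heq : ((y : ℝ) + x) / y - 1 = x / y := by field_simp; ring
        linarith [heq ▸ this]
      have hL2 : Real.log (((y : ℝ) + x) / y) ≤ Real.log (1 + x) := by
        apply Real.log_le_log hqpos
        rw [div_le_iff₀ hypos]
        nlinarith
      have key : ((x : ℝ) + y) * Real.log (((y : ℝ) + x) / y)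
          ≤ (Real.log (1 + x) + 1) * x := by
        have h3 : (y : ℝ) * Real.log (((y : ℝ) + x) / y) ≤ x := by
          calc (y : ℝ) * Real.log (((y : ℝ) + x) / y) ≤ y * (x / y) :=
                mul_le_mul_of_nonneg_left hL1 (le_of_lt hypos)
            _ = x := by field_simp
        have h4 : (x : ℝ) * Real.log (((y : ℝ) + x) / y) ≤ x * Real.log (1 + x) :=
          mul_le_mul_of_nonneg_left hL2 (le_of_lt hxpos)
        nlinarith
      have heq2 : (Real.log (1 + (x:ℝ)) + 1) * (x / (x + y))
          = (Real.log (1 + x) + 1) * x / (x + y) := by ring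
      rw [heq2, le_div_iff₀ hxy]
      nlinarith [key]
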